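/- CKW monogamy equality for the W-class pure states arising from three indistinguishable particles: let z₁, z₂, z₃ ∈ ℂ with |z₁|² + |z₂|² + |z₃|² = 1 and let ψ = z₁|110⟩ + z₂|101⟩ + z₃|011⟩ ∈ ℂ² ⊗ ℂ² ⊗ ℂ². Let ρ_AB and ρ_AC be the partial traces of |ψ⟩⟨ψ| over the third and the second factor respectively, and for a two-qubit matrix ρ set ρ̃ = (σ_y ⊗ σ_y) ρ̄ (σ_y ⊗ σ_y). Then (i) ρ_AB·ρ̃_AB has rank at most 1 and trace 4|z₂|²|z₃|², so C²_{A|B} = 4|z₂|²|z₃|²; (ii) ρ_AC·ρ̃_AC has rank at most 1 and trace 4|z₁|²|z₃|², so C²_{A|C} = 4|z₁|²|z₃|²; (iii) the reduced state ρ_A of the first qubit satisfies 4·det(ρ_A) = 4|z₃|²(1 − |z₃|²). Hence C²_{A|B} + C²_{A|C} = C²_{A|BC}, i.e., the monogamy inequality holds with equality. -/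

import Mathlib

open Kronecker

private lemma rank_vmv_le_one {m n : Type*} [Fintype m] [Fintype n]
    (u : m → ℂ) (w : n → ℂ) : (Matrix.vecMulVec u w).rank ≤ 1 := by
  rw [Matrix.vecMulVec_eq (Fin 1)]
  refine le_trans (Matrix.rank_mul_le_left _ _) ?_
  exact (Matrix.rank_le_card_width _).trans (le_of_eq (Fintype.card_fin 1))

private theorem w_prod_eq (d a b : ℂ)
    (ρ : Matrix (Fin 2 × Fin 2) (Fin 2 × Fin 2) ℂ)
    (hρ : ρ = Matrix.of fun p q =>
      (if p = ((1:Fin 2),(1:Fin 2)) ∧ q = ((1:Fin 2),(1:Fin 2)) then d * (starRingEnd ℂ) d else 0) +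
      (if p = ((1:Fin 2),(0:Fin 2)) then a else if p = ((0:Fin 2),(1:Fin 2)) then b else 0) *
      (starRingEnd ℂ) (if q = ((1:Fin 2),(0:Fin 2)) then a else if q = ((0:Fin 2),(1:Fin 2)) then b else 0))
    (σy : Matrix (Fin 2) (Fin 2) ℂ) (hσy : σy = !![0, -Complex.I; Complex.I, 0]) :
    ρ * ((σy ⊗ₖ σy) * ρ.map (starRingEnd ℂ) * (σy ⊗ₖ σy)) =
      Matrix.vecMulVec
        (fun p => if p = ((0:Fin 2),(1:Fin 2)) then b else if p = ((1:Fin 2),(0:Fin 2)) then a else 0)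
        (fun q => 2 * (starRingEnd ℂ) a * (starRingEnd ℂ) b *
          (if q = ((0:Fin 2),(1:Fin 2)) then a else if q = ((1:Fin 2),(0:Fin 2)) then b else 0)) := by
  subst hρ hσy
  ext ⟨i,j⟩ ⟨k,l⟩
  fin_cases i <;> fin_cases j <;> fin_cases k <;> fin_cases l <;>
    simp [Matrix.mul_apply, Fintype.sum_prod_type, Fin.sum_univ_two,
        Matrix.vecMulVec_apply, Matrix.kroneckerMap_apply, Matrix.map_apply, Prod.ext_iff,
        Complex.I_mul_I, map_mul]
    <;> ring

private lemma trace_vmv (a b : ℂ) :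
    Matrix.trace (Matrix.vecMulVec
        (fun p => if p = ((0:Fin 2),(1:Fin 2)) then b else if p = ((1:Fin 2),(0:Fin 2)) then a else 0)
        (fun q => 2 * (starRingEnd ℂ) a * (starRingEnd ℂ) b *
          (if q = ((0:Fin 2),(1:Fin 2)) then a else if q = ((1:Fin 2),(0:Fin 2)) then b else 0)))
      = ((4 * Complex.normSq a * Complex.normSq b : ℝ) : ℂ) := by
  have hc : ((4 * Complex.normSq a * Complex.normSq b : ℝ) : ℂ)
      = 4 * (a * (starRingEnd ℂ) a) * (b * (starRingEnd ℂ) b) := by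
    push_cast
    rw [Complex.mul_conj, Complex.mul_conj]
  rw [hc]
  simp [Matrix.trace, Matrix.diag, Fintype.sum_prod_type, Fin.sum_univ_two,
    Matrix.vecMulVec_apply]
  ring

theorem ckw_equality_w_state (z₁ z₂ z₃ : ℂ)
    (hnorm : Complex.normSq z₁ + Complex.normSq z₂ + Complex.normSq z₃ = 1)
    (ψ : Fin 2 × Fin 2 × Fin 2 → ℂ)
    (hψ : ψ = fun p => if p = ((1 : Fin 2), (1 : Fin 2), (0 : Fin 2)) then z₁
      else if p = ((1 : Fin 2), (0 : Fin 2), (1 : Fin 2)) then z₂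
      else if p = ((0 : Fin 2), (1 : Fin 2), (1 : Fin 2)) then z₃ else 0)
    (ρAB : Matrix (Fin 2 × Fin 2) (Fin 2 × Fin 2) ℂ)
    (hρAB : ρAB = Matrix.of fun p q =>
      ∑ k : Fin 2, ψ (p.1, p.2, k) * (starRingEnd ℂ) (ψ (q.1, q.2, k)))
    (ρAC : Matrix (Fin 2 × Fin 2) (Fin 2 × Fin 2) ℂ)
    (hρAC : ρAC = Matrix.of fun p q =>
      ∑ j : Fin 2, ψ (p.1, j, p.2) * (starRingEnd ℂ) (ψ (q.1, j, q.2)))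
    (ρA : Matrix (Fin 2) (Fin 2) ℂ)
    (hρA : ρA = Matrix.of fun i i' =>
      ∑ j : Fin 2, ∑ k : Fin 2, ψ (i, j, k) * (starRingEnd ℂ) (ψ (i', j, k)))
    (σy : Matrix (Fin 2) (Fin 2) ℂ)
    (hσy : σy = !![0, -Complex.I; Complex.I, 0]) :
    ((ρAB * ((σy ⊗ₖ σy) * ρAB.map (starRingEnd ℂ) * (σy ⊗ₖ σy))).rank ≤ 1 ∧
      Matrix.trace (ρAB * ((σy ⊗ₖ σy) * ρAB.map (starRingEnd ℂ) * (σy ⊗ₖ σy)))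
        = ((4 * Complex.normSq z₂ * Complex.normSq z₃ : ℝ) : ℂ)) ∧
    ((ρAC * ((σy ⊗ₖ σy) * ρAC.map (starRingEnd ℂ) * (σy ⊗ₖ σy))).rank ≤ 1 ∧
      Matrix.trace (ρAC * ((σy ⊗ₖ σy) * ρAC.map (starRingEnd ℂ) * (σy ⊗ₖ σy)))
        = ((4 * Complex.normSq z₁ * Complex.normSq z₃ : ℝ) : ℂ)) ∧
    (4 * ρA.det = ((4 * Complex.normSq z₃ * (1 - Complex.normSq z₃) : ℝ) : ℂ)) ∧
    (4 * Complex.normSq z₂ * Complex.normSq z₃ +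
        4 * Complex.normSq z₁ * Complex.normSq z₃
      = 4 * Complex.normSq z₃ * (1 - Complex.normSq z₃)) := by
  have hAB : ρAB = Matrix.of fun p q =>
      (if p = ((1:Fin 2),(1:Fin 2)) ∧ q = ((1:Fin 2),(1:Fin 2)) then z₁ * (starRingEnd ℂ) z₁ else 0) +
      (if p = ((1:Fin 2),(0:Fin 2)) then z₂ else if p = ((0:Fin 2),(1:Fin 2)) then z₃ else 0) *
      (starRingEnd ℂ) (if q = ((1:Fin 2),(0:Fin 2)) then z₂ else if q = ((0:Fin 2),(1:Fin 2)) then z₃ else 0) := by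
    subst hρAB hψ
    ext ⟨i,j⟩ ⟨k,l⟩
    fin_cases i <;> fin_cases j <;> fin_cases k <;> fin_cases l <;>
      simp [Fin.sum_univ_two, Prod.ext_iff]
  have hAC : ρAC = Matrix.of fun p q =>
      (if p = ((1:Fin 2),(1:Fin 2)) ∧ q = ((1:Fin 2),(1:Fin 2)) then z₂ * (starRingEnd ℂ) z₂ else 0) +
      (if p = ((1:Fin 2),(0:Fin 2)) then z₁ else if p = ((0:Fin 2),(1:Fin 2)) then z₃ else 0) *
      (starRingEnd ℂ) (if q = ((1:Fin 2),(0:Fin 2)) then z₁ else if q = ((0:Fin 2),(1:Fin 2)) then z₃ else 0) := by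
    subst hρAC hψ
    ext ⟨i,j⟩ ⟨k,l⟩
    fin_cases i <;> fin_cases j <;> fin_cases k <;> fin_cases l <;>
      simp [Fin.sum_univ_two, Prod.ext_iff]
  have hPAB := w_prod_eq z₁ z₂ z₃ ρAB hAB σy hσy
  have hPAC := w_prod_eq z₂ z₁ z₃ ρAC hAC σy hσy
  refine ⟨⟨?_, ?_⟩, ⟨?_, ?_⟩, ?_, ?_⟩
  · rw [hPAB]; exact rank_vmv_le_one _ _
  · rw [hPAB]; exact trace_vmv z₂ z₃
  · rw [hPAC]; exact rank_vmv_le_one _ _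
  · rw [hPAC]; exact trace_vmv z₁ z₃
  · subst hρA hψ
    have h3 : (1 : ℝ) - Complex.normSq z₃ = Complex.normSq z₁ + Complex.normSq z₂ := by
      linarith
    have hc : ((4 * Complex.normSq z₃ * (1 - Complex.normSq z₃) : ℝ) : ℂ)
        = 4 * (z₃ * (starRingEnd ℂ) z₃) *
          (z₁ * (starRingEnd ℂ) z₁ + z₂ * (starRingEnd ℂ) z₂) := by
      rw [h3]
      push_cast
      rw [Complex.mul_conj, Complex.mul_conj, Complex.mul_conj]
    rw [hc, Matrix.det_fin_two]
    simp [Fin.sum_univ_two, Prod.ext_iff]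
    ring
  · linear_combination (4 * Complex.normSq z₃) * hnorm
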